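/- Let S₁, S₂ be disjoint nonempty finite sets, S = S₁ ∪ S₂, let A be an (n,S₁)-expression, B an (n,S₂)-expression, C an (n,S)-expression, and suppose A□ᵢB ≤ C in the poset M̂ₙ(S). Then the following are equivalent: (1) C−S₂ = A and C−S₁ = B (the morphism A□ᵢB ≤ C is a strong (card S₁, card S₂)-shuffle); (2) there is no nontrivial factorization of the relation: there do not exist an (n,S₁)-expression X and an (n,S₂)-expression Y with (X,Y) ≠ (A,B), A ≤ X in M̂ₙ(S₁), B ≤ Y in M̂ₙ(S₂), and X□ᵢY ≤ C in M̂ₙ(S). -/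

import Mathlib

/-- Formal `(n, Fin k)`-expressions: binary trees whose leaves are labeled by
generators and whose internal nodes are labeled by one of the `n` operations.
Expressions are considered up to the strict associativity of each operation,
via the relation `W.equiv` below. -/
inductive W (n k : ℕ) : Type
  | leaf : Fin k → W n k
  | node : Fin n → W n k → W n k → W n k

namespace W

variable {n k : ℕ}

/-- The list of leaf labels, from left to right. -/
def leaves : W n k → List (Fin k)
  | leaf a => [a]
  | node _ A B => A.leaves ++ B.leaves

/-- `A.Exact T`: the expression `A` uses each element of `T` exactly once and
no other generators. -/
def Exact (A : W n k) (T : Finset (Fin k)) : Prop :=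
  A.leaves.Nodup ∧ A.leaves.toFinset = T

/-- `A.inRel a b i` means `a □ᵢ b` in `A`: the lowest common "ancestor" node of the
leaves `a` and `b` carries the operation `i`, with `a` to the left of `b`. -/
def inRel : W n k → Fin k → Fin k → Fin n → Prop
  | leaf _, _, _, _ => False
  | node j A B, a, b, i => A.inRel a b i ∨ B.inRel a b i ∨ (j = i ∧ a ∈ A.leaves ∧ b ∈ B.leaves)

/-- The order relation of the poset `M̂ₙ`: `A ≤ B` iff whenever `a □ᵢ b` in `A`,
either `a □ⱼ b` in `B` for some `j ≥ i`, or `b □ⱼ a` in `B` for some `j > i`. -/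
def le (A B : W n k) : Prop :=
  ∀ a b : Fin k, a ≠ b → ∀ i : Fin n, A.inRel a b i →
    ∃ j : Fin n, (i ≤ j ∧ B.inRel a b j) ∨ (i < j ∧ B.inRel b a j)

/-- One step of the associativity/congruence relation on expressions. -/
inductive Step : W n k → W n k → Prop
  | assoc (i : Fin n) (A B C : W n k) :
      Step (node i (node i A B) C) (node i A (node i B C))
  | congr_left (i : Fin n) {A A' : W n k} (B : W n k) :
      Step A A' → Step (node i A B) (node i A' B)
  | congr_right (i : Fin n) (A : W n k) {B B' : W n k} :
      Step B B' → Step (node i A B) (node i A B')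

/-- Equality of expressions (strict associativity of each operation). -/
def equiv (A B : W n k) : Prop := Relation.EqvGen Step A B

/-- Restriction of an expression to the leaves satisfying `p`
(`none` if no leaf survives). -/
def restrict : W n k → (Fin k → Bool) → Option (W n k)
  | leaf a, p => if p a then some (leaf a) else none
  | node i A B, p =>
    match A.restrict p, B.restrict p with
    | some A', some B' => some (node i A' B')
    | some A', none => some A'
    | none, o => o

end W

/-- Joining two possibly-empty expressions by the operation `i`, with the convention
that the empty expression is a unit. -/
def onode {n k : ℕ} (i : Fin n) : Option (W n k) → Option (W n k) → Option (W n k)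
  | some A, some B => some (W.node i A B)
  | some A, none => some A
  | none, o => o

/-- Equality of possibly-empty expressions. -/
def OEquiv {n k : ℕ} : Option (W n k) → Option (W n k) → Prop
  | none, none => True
  | some A, some B => A.equiv B
  | _, _ => False

/-- `A − T`: the expression `A` with the leaves belonging to `T` deleted. -/
def diffR {n k : ℕ} (A : W n k) (T : Finset (Fin k)) : Option (W n k) :=
  A.restrict fun a => decide (a ∉ T)


namespace W

variable {n k : ℕ}

open List

theorem leaves_ne_nil : ∀ A : W n k, A.leaves ≠ []
  | leaf a => by simp [leaves]
  | node i A B => by simp [leaves, leaves_ne_nil A]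

theorem inRel_mem : ∀ {A : W n k} {a b m}, A.inRel a b m → a ∈ A.leaves ∧ b ∈ A.leaves
  | leaf _, a, b, m, h => h.elim
  | node j L R, a, b, m, h => by
    rcases h with h | h | ⟨rfl, ha, hb⟩
    · have := inRel_mem h; simp [leaves]; tauto
    · have := inRel_mem h; simp [leaves]; tauto
    · simp [leaves]; tauto

theorem nodup_node {j : Fin n} {L R : W n k} (h : (node j L R).leaves.Nodup) :
    L.leaves.Nodup ∧ R.leaves.Nodup ∧ L.leaves.Disjoint R.leaves := by
  simp [leaves, List.nodup_append] at h
  exact ⟨h.1, h.2.1, fun a ha hb => h.2.2 a ha a hb rfl⟩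

theorem inRel_ne : ∀ {A : W n k} {a b m}, A.leaves.Nodup → A.inRel a b m → a ≠ b
  | leaf _, a, b, m, _, h => h.elim
  | node j L R, a, b, m, hnd, h => by
    obtain ⟨h1, h2, h3⟩ := nodup_node hnd
    rcases h with h | h | ⟨rfl, ha, hb⟩
    · exact inRel_ne h1 h
    · exact inRel_ne h2 h
    · rintro rfl; exact h3 ha hb

theorem inRel_unique : ∀ {A : W n k} {a b m m'}, A.leaves.Nodup →
    A.inRel a b m → A.inRel a b m' → m = m'
  | leaf _, a, b, m, m', _, h, _ => h.elim
  | node j L R, a, b, m, m', hnd, h, h' => by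
    obtain ⟨h1, h2, h3⟩ := nodup_node hnd
    replace h3 : ∀ x, x ∈ L.leaves → x ∈ R.leaves → False := fun x hx hy => h3 hx hy
    rcases h with h | h | ⟨e, ha, hb⟩ <;> rcases h' with h' | h' | ⟨e', ha', hb'⟩
    · exact inRel_unique h1 h h'
    · exact (h3 a (inRel_mem h).1 (inRel_mem h').1).elim
    · exact (h3 b (inRel_mem h).2 hb').elim
    · exact (h3 a (inRel_mem h').1 (inRel_mem h).1).elim
    · exact inRel_unique h2 h h'
    · exact (h3 a ha' (inRel_mem h).1).elim
    · exact (h3 b (inRel_mem h').2 hb).elim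
    · exact (h3 a ha (inRel_mem h').1).elim
    · exact e.symm.trans e'

theorem inRel_asymm : ∀ {A : W n k} {a b m m'}, A.leaves.Nodup →
    A.inRel a b m → A.inRel b a m' → False
  | leaf _, a, b, m, m', _, h, _ => h.elim
  | node j L R, a, b, m, m', hnd, h, h' => by
    obtain ⟨h1, h2, h3⟩ := nodup_node hnd
    replace h3 : ∀ x, x ∈ L.leaves → x ∈ R.leaves → False := fun x hx hy => h3 hx hy
    rcases h with h | h | ⟨e, ha, hb⟩ <;> rcases h' with h' | h' | ⟨e', hB, hA⟩
    · exact inRel_asymm h1 h h'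
    · exact h3 a (inRel_mem h).1 (inRel_mem h').2
    · exact h3 a (inRel_mem h).1 hA
    · exact h3 b (inRel_mem h').1 (inRel_mem h).2
    · exact inRel_asymm h2 h h'
    · exact h3 b hB (inRel_mem h).2
    · exact h3 b (inRel_mem h').1 hb
    · exact h3 a ha (inRel_mem h').2
    · exact h3 a ha hA


theorem pair_sublist_append {α : Type*} (a b : α) : ∀ (l₁ l₂ : List α),
    ([a, b] <+ l₁ ++ l₂ ↔ [a, b] <+ l₁ ∨ [a, b] <+ l₂ ∨ (a ∈ l₁ ∧ b ∈ l₂))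
  | [], l₂ => by simp
  | x :: l₁, l₂ => by
    simp only [List.cons_append, List.sublist_cons_iff, pair_sublist_append a b l₁ l₂,
      List.singleton_sublist, List.mem_append, List.mem_cons, List.cons.injEq]
    constructor
    · rintro ((h | h | h) | ⟨r, ⟨rfl, rfl⟩, hr⟩)
      · tauto
      · tauto
      · tauto
      · rcases List.mem_append.mp (List.singleton_sublist.mp hr) with hb | hb
        · exact Or.inl (Or.inr ⟨[b], ⟨rfl, rfl⟩, List.singleton_sublist.mpr hb⟩)
        · exact Or.inr (Or.inr ⟨Or.inl rfl, hb⟩)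
    · rintro ((h | ⟨r, ⟨rfl, rfl⟩, hr⟩) | h | ⟨(rfl | ha), hb⟩)
      · tauto
      · exact Or.inr ⟨[b], ⟨rfl, rfl⟩,
          List.singleton_sublist.mpr (List.mem_append.mpr (Or.inl (List.singleton_sublist.mp hr)))⟩
      · tauto
      · exact Or.inr ⟨[b], ⟨rfl, rfl⟩, List.singleton_sublist.mpr (List.mem_append.mpr (Or.inr hb))⟩
      · tauto

theorem list_eq_of_pair_sublist {α : Type*} : ∀ (l₁ l₂ : List α), l₁.Nodup → l₂.Nodup →
    (∀ x, x ∈ l₁ ↔ x ∈ l₂) → (∀ x y : α, x ≠ y → ([x, y] <+ l₁ ↔ [x, y] <+ l₂)) → l₁ = l₂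
  | [], l₂, _, _, hm, _ => by
    simp only [List.not_mem_nil, false_iff] at hm
    exact (List.eq_nil_iff_forall_not_mem.mpr (fun a ha => hm a ha)).symm
  | a :: t, l₂, hn₁, hn₂, hm, hp => by
    have ha2 : a ∈ l₂ := (hm a).mp List.mem_cons_self
    obtain ⟨c, t₂, rfl⟩ : ∃ c t₂, l₂ = c :: t₂ := by
      cases l₂ with
      | nil => simp at ha2
      | cons c t₂ => exact ⟨c, t₂, rfl⟩
    have hca : c = a := by
      by_contra hne
      have hat₂ : a ∈ t₂ := by
        rcases List.mem_cons.mp ha2 with h | h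
        · exact absurd h.symm hne
        · exact h
      have hct : c ∈ t := by
        rcases List.mem_cons.mp ((hm c).mpr List.mem_cons_self) with h | h
        · exact absurd h hne
        · exact h
      have hsub : [a, c] <+ a :: t := List.cons_sublist_cons.mpr (List.singleton_sublist.mpr hct)
      have hsub2 : [a, c] <+ c :: t₂ := (hp a c (fun h => hne h.symm)).mp hsub
      rcases List.sublist_cons_iff.mp hsub2 with h | ⟨r, he, hr⟩
      · exact (List.nodup_cons.mp hn₂).1 ((h.subset) (by simp))
      · injection he with h1 h2
        exact hne h1.symm
    subst hca
    have hn₁' := List.nodup_cons.mp hn₁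
    have hn₂' := List.nodup_cons.mp hn₂
    have hm' : ∀ x, x ∈ t ↔ x ∈ t₂ := by
      intro x
      constructor
      · intro hx
        have hxa : x ≠ c := fun h => hn₁'.1 (h ▸ hx)
        rcases List.mem_cons.mp ((hm x).mp (List.mem_cons_of_mem c hx)) with h | h
        · exact absurd h hxa
        · exact h
      · intro hx
        have hxa : x ≠ c := fun h => hn₂'.1 (h ▸ hx)
        rcases List.mem_cons.mp ((hm x).mpr (List.mem_cons_of_mem c hx)) with h | h
        · exact absurd h hxa
        · exact h
    have hp' : ∀ x y : α, x ≠ y → ([x, y] <+ t ↔ [x, y] <+ t₂) := by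
      intro x y hxy
      constructor
      · intro hs
        have hx : x ∈ t := hs.subset (by simp)
        have hxa : x ≠ c := fun h => hn₁'.1 (h ▸ hx)
        have := (hp x y hxy).mp (hs.trans (List.sublist_cons_self c t))
        rcases List.sublist_cons_iff.mp this with h | ⟨r, he, hr⟩
        · exact h
        · exact absurd (List.cons_eq_cons.mp he).1 hxa
      · intro hs
        have hx : x ∈ t₂ := hs.subset (by simp)
        have hxa : x ≠ c := fun h => hn₂'.1 (h ▸ hx)
        have := (hp x y hxy).mpr (hs.trans (List.sublist_cons_self c t₂))
        rcases List.sublist_cons_iff.mp this with h | ⟨r, he, hr⟩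
        · exact h
        · exact absurd (List.cons_eq_cons.mp he).1 hxa
    rw [list_eq_of_pair_sublist t t₂ hn₁'.2 hn₂'.2 hm' hp']


theorem pair_sublist_iff_inRel : ∀ {A : W n k} {a b}, A.leaves.Nodup → a ≠ b →
    ([a, b] <+ A.leaves ↔ ∃ m, A.inRel a b m)
  | leaf x, a, b, hnd, hab => by
    constructor
    · intro h
      have := h.length_le
      simp [leaves] at this
    · rintro ⟨m, hm⟩
      exact hm.elim
  | node j L R, a, b, hnd, hab => by
    obtain ⟨h1, h2, h3⟩ := nodup_node hnd
    rw [leaves, pair_sublist_append, pair_sublist_iff_inRel h1 hab,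
      pair_sublist_iff_inRel h2 hab]
    show _ ↔ ∃ m, L.inRel a b m ∨ R.inRel a b m ∨ (j = m ∧ a ∈ L.leaves ∧ b ∈ R.leaves)
    constructor
    · rintro (⟨m, hm⟩ | ⟨m, hm⟩ | ⟨ha, hb⟩)
      · exact ⟨m, Or.inl hm⟩
      · exact ⟨m, Or.inr (Or.inl hm)⟩
      · exact ⟨j, Or.inr (Or.inr ⟨rfl, ha, hb⟩)⟩
    · rintro ⟨m, hm | hm | ⟨rfl, ha, hb⟩⟩
      · exact Or.inl ⟨m, hm⟩
      · exact Or.inr (Or.inl ⟨m, hm⟩)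
      · exact Or.inr (Or.inr ⟨ha, hb⟩)

theorem equiv_node_left (i : Fin n) {A A' : W n k} (B : W n k) (h : A.equiv A') :
    (node i A B).equiv (node i A' B) := by
  induction h with
  | rel x y hxy => exact Relation.EqvGen.rel _ _ (Step.congr_left i B hxy)
  | refl x => exact Relation.EqvGen.refl _
  | symm x y _ ih => exact Relation.EqvGen.symm _ _ ih
  | trans x y z _ _ ih1 ih2 => exact Relation.EqvGen.trans _ _ _ ih1 ih2

theorem equiv_node_right (i : Fin n) (A : W n k) {B B' : W n k} (h : B.equiv B') :
    (node i A B).equiv (node i A B') := by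
  induction h with
  | rel x y hxy => exact Relation.EqvGen.rel _ _ (Step.congr_right i A hxy)
  | refl x => exact Relation.EqvGen.refl _
  | symm x y _ ih => exact Relation.EqvGen.symm _ _ ih
  | trans x y z _ _ ih1 ih2 => exact Relation.EqvGen.trans _ _ _ ih1 ih2

theorem equiv_node (i : Fin n) {A A' B B' : W n k} (hA : A.equiv A') (hB : B.equiv B') :
    (node i A B).equiv (node i A' B') :=
  Relation.EqvGen.trans _ _ _ (equiv_node_left i B hA) (equiv_node_right i A' hB)

theorem Step.leaves_eq {A B : W n k} (h : Step A B) : A.leaves = B.leaves := by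
  induction h with
  | assoc i X Y Z => simp [W.leaves, List.append_assoc]
  | congr_left i Y _ ih => simp [W.leaves, ih]
  | congr_right i X _ ih => simp [W.leaves, ih]

theorem inRel_assoc {i : Fin n} {A B C : W n k} {a b m} :
    (node i (node i A B) C).inRel a b m ↔ (node i A (node i B C)).inRel a b m := by
  simp only [inRel, leaves, List.mem_append]
  tauto

theorem Step.inRel_iff {A B : W n k} (h : Step A B) (a b : Fin k) (m : Fin n) :
    A.inRel a b m ↔ B.inRel a b m := by
  induction h with
  | assoc i X Y Z => exact inRel_assoc
  | congr_left i Y hs ih => simp only [inRel, ih, hs.leaves_eq]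
  | congr_right i X hs ih => simp only [inRel, ih, hs.leaves_eq]

theorem equiv.leaves_eq {A B : W n k} (h : A.equiv B) : A.leaves = B.leaves := by
  induction h with
  | rel x y hxy => exact hxy.leaves_eq
  | refl x => rfl
  | symm x y _ ih => exact ih.symm
  | trans x y z _ _ ih1 ih2 => exact ih1.trans ih2

theorem equiv.inRel_iff {A B : W n k} (h : A.equiv B) (a b : Fin k) (m : Fin n) :
    A.inRel a b m ↔ B.inRel a b m := by
  induction h with
  | rel x y hxy => exact hxy.inRel_iff a b m
  | refl x => exact Iff.rfl
  | symm x y _ ih => exact ih.symm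
  | trans x y z _ _ ih1 ih2 => exact ih1.trans ih2


theorem head_eq_of_eq {α : Type*} {l₁ l₂ : List α} (h : l₁ = l₂) (h₁ : l₁ ≠ []) (h₂ : l₂ ≠ []) :
    l₁.head h₁ = l₂.head h₂ := by subst h; rfl

theorem getLast_eq_of_eq {α : Type*} {l₁ l₂ : List α} (h : l₁ = l₂) (h₁ : l₁ ≠ []) (h₂ : l₂ ≠ []) :
    l₁.getLast h₁ = l₂.getLast h₂ := by subst h; rfl

theorem head_mem_left {α : Type*} {l₁ l₂ : List α} (h : l₁ ≠ []) (hh : l₁ ++ l₂ ≠ []) :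
    (l₁ ++ l₂).head hh ∈ l₁ := by
  rw [List.head_append_of_ne_nil h]; exact List.head_mem h

theorem getLast_mem_right {α : Type*} {l₁ l₂ : List α} (h : l₂ ≠ []) (hh : l₁ ++ l₂ ≠ []) :
    (l₁ ++ l₂).getLast hh ∈ l₂ := by
  rw [List.getLast_append_of_ne_nil (l := l₁) (l' := l₂) _ h]; exact List.getLast_mem h

/-- The number of leaves of the right-hand child. -/
def rsize : W n k → ℕ
  | leaf _ => 0
  | node _ _ R => R.leaves.length

theorem rsize_le : ∀ A : W n k, rsize A ≤ A.leaves.length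
  | leaf _ => by simp [rsize]
  | node i L R => by simp [rsize, leaves]

theorem length_pos (A : W n k) : 0 < A.leaves.length :=
  List.length_pos_iff.mpr (leaves_ne_nil A)

theorem equiv_of_inRel_eq_aux (N : ℕ) : ∀ A B : W n k,
    A.leaves.length ^ 2 + rsize A + rsize B ≤ N →
    A.leaves.Nodup → B.leaves.Nodup → A.leaves = B.leaves →
    (∀ a b m, A.inRel a b m ↔ B.inRel a b m) → A.equiv B := by
  induction N using Nat.strong_induction_on with
  | _ N IH =>
  intro A B hmeas hndA hndB hlv hrel
  cases A with
  | leaf a =>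
    cases B with
    | leaf b =>
      obtain rfl : a = b := by simpa [leaves] using hlv
      exact Relation.EqvGen.refl _
    | node j B₁ B₂ =>
      exfalso
      have := congrArg List.length hlv
      have h1 := length_pos B₁
      have h2 := length_pos B₂
      simp [leaves] at this
      omega
  | node i A₁ A₂ =>
    cases B with
    | leaf b =>
      exfalso
      have := congrArg List.length hlv
      have h1 := length_pos A₁
      have h2 := length_pos A₂
      simp [leaves] at this
      omega
    | node j B₁ B₂ =>
      obtain ⟨hnA₁, hnA₂, disjA⟩ := nodup_node hndA
      obtain ⟨hnB₁, hnB₂, disjB⟩ := nodup_node hndB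
      replace disjA : ∀ x, x ∈ A₁.leaves → x ∈ A₂.leaves → False := fun x hx hy => disjA hx hy
      replace disjB : ∀ x, x ∈ B₁.leaves → x ∈ B₂.leaves → False := fun x hx hy => disjB hx hy
      simp only [leaves] at hlv
      obtain rfl : i = j := by
        have haA : A₁.leaves.head (leaves_ne_nil A₁) ∈ A₁.leaves := List.head_mem _
        have hzA : A₂.leaves.getLast (leaves_ne_nil A₂) ∈ A₂.leaves := List.getLast_mem _
        have ha₀B : A₁.leaves.head (leaves_ne_nil A₁) ∈ B₁.leaves := by
          have h1 : A₁.leaves.head (leaves_ne_nil A₁) =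
              (A₁.leaves ++ A₂.leaves).head (by simp [leaves_ne_nil A₁]) :=
            (List.head_append_of_ne_nil _).symm
          rw [h1, head_eq_of_eq hlv _ (by simp [leaves_ne_nil B₁])]
          exact head_mem_left (leaves_ne_nil B₁) _
        have hzB : A₂.leaves.getLast (leaves_ne_nil A₂) ∈ B₂.leaves := by
          have h1 : A₂.leaves.getLast (leaves_ne_nil A₂) =
              (A₁.leaves ++ A₂.leaves).getLast (by simp [leaves_ne_nil A₂]) :=
            (List.getLast_append_of_ne_nil _ (leaves_ne_nil A₂)).symm
          rw [h1, getLast_eq_of_eq hlv _ (by simp [leaves_ne_nil B₂])]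
          exact getLast_mem_right (leaves_ne_nil B₂) _
        have hAi : (node i A₁ A₂).inRel (A₁.leaves.head (leaves_ne_nil A₁))
            (A₂.leaves.getLast (leaves_ne_nil A₂)) i := Or.inr (Or.inr ⟨rfl, haA, hzA⟩)
        have hBj : (node j B₁ B₂).inRel (A₁.leaves.head (leaves_ne_nil A₁))
            (A₂.leaves.getLast (leaves_ne_nil A₂)) j := Or.inr (Or.inr ⟨rfl, ha₀B, hzB⟩)
        exact inRel_unique hndB ((hrel _ _ _).mp hAi) hBj
      rcases lt_trichotomy A₁.leaves.length B₁.leaves.length with hlt | heq | hgt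
      · -- A₁ is shorter: restructure A by associativity
        obtain ⟨r, hB₁, hA₂⟩ : ∃ r, B₁.leaves = A₁.leaves ++ r ∧ A₂.leaves = r ++ B₂.leaves := by
          rcases List.append_eq_append_iff.mp hlv with ⟨r, h1, h2⟩ | ⟨r, h1, h2⟩
          · exact ⟨r, h1, h2⟩
          · exfalso
            have := congrArg List.length h1
            simp at this
            omega
        obtain ⟨x, r', rfl⟩ : ∃ x r', r = x :: r' := by
          cases r with
          | nil =>
            exfalso
            have := congrArg List.length hB₁
            simp at this
            omega
          | cons x r' => exact ⟨x, r', rfl⟩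
        have hcB : x ∈ B₁.leaves := by rw [hB₁]; simp
        have hcA : x ∈ A₂.leaves := by rw [hA₂]; simp
        have hdB2 : A₂.leaves.getLast (leaves_ne_nil A₂) ∈ B₂.leaves := by
          rw [getLast_eq_of_eq hA₂ _ (by simp [leaves_ne_nil B₂]),
            List.getLast_append_of_ne_nil _ (leaves_ne_nil B₂)]
          exact List.getLast_mem _
        have hBrel : (node i B₁ B₂).inRel x (A₂.leaves.getLast (leaves_ne_nil A₂)) i :=
          Or.inr (Or.inr ⟨rfl, hcB, hdB2⟩)
        have hA₂rel : A₂.inRel x (A₂.leaves.getLast (leaves_ne_nil A₂)) i := by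
          rcases (hrel _ _ _).mpr hBrel with h | h | ⟨e, ha, hb⟩
          · exact absurd (inRel_mem h).1 (fun hm => disjA x hm hcA)
          · exact h
          · exact absurd ha (fun hm => disjA x hm hcA)
        obtain ⟨i₂, P, Q, rfl⟩ : ∃ i₂ P Q, A₂ = node i₂ P Q := by
          cases A₂ with
          | leaf y => exact absurd hA₂rel (by simp [inRel])
          | node i₂ P Q => exact ⟨i₂, P, Q, rfl⟩
        obtain rfl : i = i₂ := by
          have hxP : x ∈ P.leaves := by
            rw [List.cons_append] at hA₂
            have hP := leaves_ne_nil P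
            cases hPl : P.leaves with
            | nil => exact absurd hPl hP
            | cons p ps =>
              have hthis : (node i₂ P Q).leaves = p :: (ps ++ Q.leaves) := by
                simp [leaves, hPl]
              rw [hA₂] at hthis
              obtain ⟨rfl, -⟩ := List.cons_eq_cons.mp hthis.symm
              simp [hPl]
          have hdQ : (node i₂ P Q).leaves.getLast (leaves_ne_nil _) ∈ Q.leaves := by
            have hthis : (node i₂ P Q).leaves.getLast (leaves_ne_nil _) =
                (P.leaves ++ Q.leaves).getLast (by simp [leaves_ne_nil Q]) := by
              apply getLast_eq_of_eq; rfl
            rw [hthis, List.getLast_append_of_ne_nil _ (leaves_ne_nil Q)]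
            exact List.getLast_mem _
          have hcross : (node i₂ P Q).inRel x ((node i₂ P Q).leaves.getLast (leaves_ne_nil _)) i₂ :=
            Or.inr (Or.inr ⟨rfl, hxP, hdQ⟩)
          have hlast : (node i₂ P Q).leaves.getLast (leaves_ne_nil _) =
              (node i₂ P Q).leaves.getLast (leaves_ne_nil _) := rfl
          exact inRel_unique hnA₂ hA₂rel hcross
        have hstep : Step (node i (node i A₁ P) Q) (node i A₁ (node i P Q)) :=
          Step.assoc i A₁ P Q
        have hmeas' : (node i (node i A₁ P) Q).leaves.length ^ 2 +
            rsize (node i (node i A₁ P) Q) + rsize (node i B₁ B₂) < N := by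
          have e : (node i (node i A₁ P) Q).leaves.length =
              (node i A₁ (node i P Q)).leaves.length := by
            rw [hstep.leaves_eq]
          rw [e]
          have h1 : rsize (node i (node i A₁ P) Q) < rsize (node i A₁ (node i P Q)) := by
            simp only [rsize, leaves, List.length_append]
            have := length_pos P
            omega
          linarith [hmeas, h1]
        have hrec : (node i (node i A₁ P) Q).equiv (node i B₁ B₂) := by
          apply IH _ hmeas' _ _ le_rfl
          · rw [hstep.leaves_eq]; exact hndA
          · exact hndB
          · rw [hstep.leaves_eq]; simp only [leaves]; exact hlv
          · intro a b m
            exact (hstep.inRel_iff a b m).trans (hrel a b m)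
        exact Relation.EqvGen.trans _ _ _
          (Relation.EqvGen.symm _ _ (Relation.EqvGen.rel _ _ hstep)) hrec
      · -- equal lengths: recurse on both children
        obtain ⟨e₁, e₂⟩ := List.append_inj hlv heq
        have hr₁ : ∀ a b m, A₁.inRel a b m ↔ B₁.inRel a b m := by
          intro a b m
          constructor
          · intro h
            rcases (hrel a b m).mp (Or.inl h) with h' | h' | ⟨e, ha, hb⟩
            · exact h'
            · exact absurd (inRel_mem h').1 (fun hm => disjB a (e₁ ▸ (inRel_mem h).1) hm)
            · exact absurd hb (fun hm => disjB b (e₁ ▸ (inRel_mem h).2) hm)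
          · intro h
            rcases (hrel a b m).mpr (Or.inl h) with h' | h' | ⟨e, ha, hb⟩
            · exact h'
            · exact absurd (inRel_mem h').1 (fun hm => disjA a (e₁.symm ▸ (inRel_mem h).1) hm)
            · exact absurd hb (fun hm => disjA b (e₁.symm ▸ (inRel_mem h).2) hm)
        have hr₂ : ∀ a b m, A₂.inRel a b m ↔ B₂.inRel a b m := by
          intro a b m
          constructor
          · intro h
            rcases (hrel a b m).mp (Or.inr (Or.inl h)) with h' | h' | ⟨e, ha, hb⟩
            · exact absurd (inRel_mem h').1 (fun hm => disjB a hm (e₂ ▸ (inRel_mem h).1))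
            · exact h'
            · exact absurd ha (fun hm => disjB a hm (e₂ ▸ (inRel_mem h).1))
          · intro h
            rcases (hrel a b m).mpr (Or.inr (Or.inl h)) with h' | h' | ⟨e, ha, hb⟩
            · exact absurd (inRel_mem h').1 (fun hm => disjA a hm (e₂.symm ▸ (inRel_mem h).1))
            · exact h'
            · exact absurd ha (fun hm => disjA a hm (e₂.symm ▸ (inRel_mem h).1))
        have hp1 := length_pos A₁
        have hp2 := length_pos A₂
        have hmeasn := hmeas
        simp only [rsize, leaves, List.length_append] at hmeasn
        have hmeas₁ : A₁.leaves.length ^ 2 + rsize A₁ + rsize B₁ < N := by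
          have h1 := rsize_le A₁
          have h2 := rsize_le B₁
          rw [← e₁] at h2
          nlinarith [hmeasn, h1, h2, hp1, hp2]
        have hmeas₂ : A₂.leaves.length ^ 2 + rsize A₂ + rsize B₂ < N := by
          have h1 := rsize_le A₂
          have h2 := rsize_le B₂
          rw [← e₂] at h2
          nlinarith [hmeasn, h1, h2, hp1, hp2]
        exact equiv_node i
          (IH _ hmeas₁ A₁ B₁ le_rfl hnA₁ hnB₁ e₁ hr₁)
          (IH _ hmeas₂ A₂ B₂ le_rfl hnA₂ hnB₂ e₂ hr₂)
      · -- B₁ is shorter: restructure B by associativity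
        obtain ⟨r, hA₁, hB₂⟩ : ∃ r, A₁.leaves = B₁.leaves ++ r ∧ B₂.leaves = r ++ A₂.leaves := by
          rcases List.append_eq_append_iff.mp hlv with ⟨r, h1, h2⟩ | ⟨r, h1, h2⟩
          · exfalso
            have := congrArg List.length h1
            simp at this
            omega
          · exact ⟨r, h1, h2⟩
        obtain ⟨x, r', rfl⟩ : ∃ x r', r = x :: r' := by
          cases r with
          | nil =>
            exfalso
            have := congrArg List.length hA₁
            simp at this
            omega
          | cons x r' => exact ⟨x, r', rfl⟩
        have hcA : x ∈ A₁.leaves := by rw [hA₁]; simp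
        have hcB : x ∈ B₂.leaves := by rw [hB₂]; simp
        have hdA2 : B₂.leaves.getLast (leaves_ne_nil B₂) ∈ A₂.leaves := by
          rw [getLast_eq_of_eq hB₂ _ (by simp [leaves_ne_nil A₂]),
            List.getLast_append_of_ne_nil _ (leaves_ne_nil A₂)]
          exact List.getLast_mem _
        have hArel : (node i A₁ A₂).inRel x (B₂.leaves.getLast (leaves_ne_nil B₂)) i :=
          Or.inr (Or.inr ⟨rfl, hcA, hdA2⟩)
        have hB₂rel : B₂.inRel x (B₂.leaves.getLast (leaves_ne_nil B₂)) i := by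
          rcases (hrel _ _ _).mp hArel with h | h | ⟨e, ha, hb⟩
          · exact absurd (inRel_mem h).1 (fun hm => disjB x hm hcB)
          · exact h
          · exact absurd ha (fun hm => disjB x hm hcB)
        obtain ⟨i₂, P, Q, rfl⟩ : ∃ i₂ P Q, B₂ = node i₂ P Q := by
          cases B₂ with
          | leaf y => exact absurd hB₂rel (by simp [inRel])
          | node i₂ P Q => exact ⟨i₂, P, Q, rfl⟩
        obtain rfl : i = i₂ := by
          have hxP : x ∈ P.leaves := by
            rw [List.cons_append] at hB₂
            have hP := leaves_ne_nil P
            cases hPl : P.leaves with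
            | nil => exact absurd hPl hP
            | cons p ps =>
              have hthis : (node i₂ P Q).leaves = p :: (ps ++ Q.leaves) := by
                simp [leaves, hPl]
              rw [hB₂] at hthis
              obtain ⟨rfl, -⟩ := List.cons_eq_cons.mp hthis.symm
              simp [hPl]
          have hdQ : (node i₂ P Q).leaves.getLast (leaves_ne_nil _) ∈ Q.leaves := by
            have hthis : (node i₂ P Q).leaves.getLast (leaves_ne_nil _) =
                (P.leaves ++ Q.leaves).getLast (by simp [leaves_ne_nil Q]) := by
              apply getLast_eq_of_eq; rfl
            rw [hthis, List.getLast_append_of_ne_nil _ (leaves_ne_nil Q)]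
            exact List.getLast_mem _
          have hcross : (node i₂ P Q).inRel x ((node i₂ P Q).leaves.getLast (leaves_ne_nil _)) i₂ :=
            Or.inr (Or.inr ⟨rfl, hxP, hdQ⟩)
          exact inRel_unique hnB₂ hB₂rel hcross
        have hstep : Step (node i (node i B₁ P) Q) (node i B₁ (node i P Q)) :=
          Step.assoc i B₁ P Q
        have hmeas' : (node i A₁ A₂).leaves.length ^ 2 +
            rsize (node i A₁ A₂) + rsize (node i (node i B₁ P) Q) < N := by
          have h1 : rsize (node i (node i B₁ P) Q) < rsize (node i B₁ (node i P Q)) := by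
            simp only [rsize, leaves, List.length_append]
            have := length_pos P
            omega
          linarith [hmeas, h1]
        have hrec : (node i A₁ A₂).equiv (node i (node i B₁ P) Q) := by
          apply IH _ hmeas' _ _ le_rfl hndA
          · rw [hstep.leaves_eq]; exact hndB
          · rw [hstep.leaves_eq]; simp only [leaves]; exact hlv
          · intro a b m
            exact (hrel a b m).trans (hstep.inRel_iff a b m).symm
        exact Relation.EqvGen.trans _ _ _ hrec (Relation.EqvGen.rel _ _ hstep)

theorem equiv_of_le_le {A B : W n k} (hndA : A.leaves.Nodup) (hndB : B.leaves.Nodup)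
    (hset : ∀ x, x ∈ A.leaves ↔ x ∈ B.leaves)
    (hAB : A.le B) (hBA : B.le A) : A.equiv B := by
  have hrel : ∀ a b m, A.inRel a b m ↔ B.inRel a b m := by
    have key : ∀ (A B : W n k), A.leaves.Nodup → B.leaves.Nodup → A.le B → B.le A →
        ∀ a b m, A.inRel a b m → B.inRel a b m := by
      intro A B hndA hndB hAB hBA a b m h
      have hab := inRel_ne hndA h
      obtain ⟨j, ⟨hij, hj⟩ | ⟨hij, hj⟩⟩ := hAB a b hab m h
      · obtain ⟨l, ⟨hjl, hl⟩ | ⟨hjl, hl⟩⟩ := hBA a b hab j hj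
        · obtain rfl : m = j := le_antisymm hij ((inRel_unique hndA h hl) ▸ hjl)
          exact hj
        · exact absurd hl (fun hl => inRel_asymm hndA h hl)
      · obtain ⟨l, ⟨hjl, hl⟩ | ⟨hjl, hl⟩⟩ := hBA b a hab.symm j hj
        · exact absurd hl (fun hl => inRel_asymm hndA h hl)
        · have hml : m = l := inRel_unique hndA h hl
          have hmlt : m < l := hij.trans hjl
          rw [hml] at hmlt
          exact absurd hmlt (lt_irrefl l)
    intro a b m
    exact ⟨key A B hndA hndB hAB hBA a b m, key B A hndB hndA hBA hAB a b m⟩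
  have hleq : A.leaves = B.leaves := by
    apply list_eq_of_pair_sublist _ _ hndA hndB hset
    intro x y hxy
    constructor
    · intro hs
      obtain ⟨m, hm⟩ := (pair_sublist_iff_inRel hndA hxy).mp hs
      exact (pair_sublist_iff_inRel hndB hxy).mpr ⟨m, (hrel _ _ _).mp hm⟩
    · intro hs
      obtain ⟨m, hm⟩ := (pair_sublist_iff_inRel hndB hxy).mp hs
      exact (pair_sublist_iff_inRel hndA hxy).mpr ⟨m, (hrel _ _ _).mpr hm⟩
  exact equiv_of_inRel_eq_aux _ A B le_rfl hndA hndB hleq hrel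

theorem restrict_leaves : ∀ (A : W n k) (p : Fin k → Bool),
    (A.restrict p).elim [] leaves = A.leaves.filter p
  | leaf a, p => by
    by_cases h : p a <;> simp [restrict, leaves, h]
  | node i L R, p => by
    have hL := restrict_leaves L p
    have hR := restrict_leaves R p
    cases hL' : L.restrict p with
    | none =>
      rw [hL'] at hL
      cases hR' : R.restrict p with
      | none =>
        rw [hR'] at hR
        simp only [leaves, List.filter_append, ← hL, ← hR]
        simp [restrict, hL', hR']
      | some R' =>
        rw [hR'] at hR
        simp only [leaves, List.filter_append, ← hL, ← hR]
        simp [restrict, hL', hR']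
    | some L' =>
      rw [hL'] at hL
      cases hR' : R.restrict p with
      | none =>
        rw [hR'] at hR
        simp only [leaves, List.filter_append, ← hL, ← hR]
        simp [restrict, hL', hR']
      | some R' =>
        rw [hR'] at hR
        simp only [leaves, List.filter_append, ← hL, ← hR]
        simp [restrict, hL', hR', leaves]

theorem restrict_eq_none {A : W n k} {p : Fin k → Bool} (h : A.restrict p = none) :
    A.leaves.filter p = [] := by
  have := restrict_leaves A p
  rw [h] at this
  simpa using this.symm

theorem restrict_some_leaves {A A' : W n k} {p : Fin k → Bool} (h : A.restrict p = some A') :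
    A'.leaves = A.leaves.filter p := by
  have := restrict_leaves A p
  rw [h] at this
  simpa using this

theorem restrict_isSome {A : W n k} {p : Fin k → Bool} (h : ∃ x ∈ A.leaves, p x = true) :
    ∃ A', A.restrict p = some A' := by
  cases hr : A.restrict p with
  | none =>
    exfalso
    obtain ⟨x, hx, hpx⟩ := h
    have := restrict_eq_none hr
    have : x ∈ A.leaves.filter p := List.mem_filter.mpr ⟨hx, hpx⟩
    simp_all
  | some A' => exact ⟨A', rfl⟩

theorem inRel_restrict : ∀ {A : W n k} (A' : W n k) {p : Fin k → Bool} {a b : Fin k} {m : Fin n},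
    A.restrict p = some A' → p a = true → p b = true → (A'.inRel a b m ↔ A.inRel a b m)
  | leaf x, A', p, a, b, m, h, hpa, hpb => by
    by_cases hx : p x
    · simp only [restrict, if_pos hx, Option.some.injEq] at h
      subst h
      simp [inRel]
    · simp [restrict, hx] at h
  | node i L R, A', p, a, b, m, h, hpa, hpb => by
    cases hL : L.restrict p with
    | some L' =>
      cases hR : R.restrict p with
      | some R' =>
        obtain rfl : A' = node i L' R' := by
          simp only [restrict, hL, hR, Option.some.injEq] at h
          exact h.symm
        show (L'.inRel a b m ∨ R'.inRel a b m ∨ (i = m ∧ a ∈ L'.leaves ∧ b ∈ R'.leaves)) ↔ _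
        rw [inRel_restrict L' hL hpa hpb, inRel_restrict R' hR hpa hpb]
        have ma : a ∈ L'.leaves ↔ a ∈ L.leaves := by
          rw [restrict_some_leaves hL]
          simp [List.mem_filter, hpa]
        have mb : b ∈ R'.leaves ↔ b ∈ R.leaves := by
          rw [restrict_some_leaves hR]
          simp [List.mem_filter, hpb]
        rw [ma, mb]
        exact Iff.rfl
      | none =>
        obtain rfl : A' = L' := by
          simp only [restrict, hL, hR, Option.some.injEq] at h
          exact h.symm
        rw [inRel_restrict A' hL hpa hpb]
        constructor
        · exact fun hh => Or.inl hh
        · rintro (hh | hh | ⟨e, ha, hb⟩)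
          · exact hh
          · exfalso
            have h1 := restrict_eq_none hR
            have h2 : a ∈ R.leaves.filter p := List.mem_filter.mpr ⟨(inRel_mem hh).1, hpa⟩
            simp_all
          · exfalso
            have h1 := restrict_eq_none hR
            have h2 : b ∈ R.leaves.filter p := List.mem_filter.mpr ⟨hb, hpb⟩
            simp_all
    | none =>
      have hA' : R.restrict p = some A' := by simpa [restrict, hL] using h
      rw [inRel_restrict A' hA' hpa hpb]
      constructor
      · exact fun hh => Or.inr (Or.inl hh)
      · rintro (hh | hh | ⟨e, ha, hb⟩)
        · exfalso
          have h1 := restrict_eq_none hL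
          have h2 : a ∈ L.leaves.filter p := List.mem_filter.mpr ⟨(inRel_mem hh).1, hpa⟩
          simp_all
        · exact hh
        · exfalso
          have h1 := restrict_eq_none hL
          have h2 : a ∈ L.leaves.filter p := List.mem_filter.mpr ⟨ha, hpa⟩
          simp_all

end W

/-- STATEMENT 14: for a morphism `A □ᵢ B ≤ C` in `M̂ₙ(S)` (with `S = S₁ ⊔ S₂`,
`A` supported on `S₁`, `B` on `S₂`), being a strong shuffle (`C−S₂ = A` and
`C−S₁ = B`) is equivalent to admitting no nontrivial factorization through some
`X □ᵢ Y` with `A ≤ X`, `B ≤ Y`. -/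
theorem strong_shuffle_iff_no_factorization (n k : ℕ) (hn : 1 ≤ n)
    (S₁ S₂ : Finset (Fin k)) (h₁ : S₁.Nonempty) (h₂ : S₂.Nonempty) (hd : Disjoint S₁ S₂)
    (A B C : W n k) (hA : A.Exact S₁) (hB : B.Exact S₂) (hC : C.Exact (S₁ ∪ S₂))
    (i : Fin n) (hle : (W.node i A B).le C) :
    ((∃ CA, C.restrict (fun a => decide (a ∈ S₁)) = some CA ∧ CA.equiv A) ∧
     (∃ CB, C.restrict (fun a => decide (a ∈ S₂)) = some CB ∧ CB.equiv B)) ↔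
    ¬ ∃ X Y : W n k, X.Exact S₁ ∧ Y.Exact S₂ ∧ ¬ (X.equiv A ∧ Y.equiv B) ∧
        A.le X ∧ B.le Y ∧ (W.node i X Y).le C := by
  classical
  obtain ⟨hAnd, hAset⟩ := hA
  obtain ⟨hBnd, hBset⟩ := hB
  obtain ⟨hCnd, hCset⟩ := hC
  have hmemA : ∀ x, x ∈ A.leaves ↔ x ∈ S₁ := fun x => by rw [← hAset, List.mem_toFinset]
  have hmemB : ∀ x, x ∈ B.leaves ↔ x ∈ S₂ := fun x => by rw [← hBset, List.mem_toFinset]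
  have hmemC : ∀ x, x ∈ C.leaves ↔ x ∈ S₁ ∨ x ∈ S₂ := fun x => by
    rw [← List.mem_toFinset, hCset, Finset.mem_union]
  obtain ⟨CA, hCA⟩ : ∃ CA, C.restrict (fun a => decide (a ∈ S₁)) = some CA := by
    obtain ⟨x, hx⟩ := h₁
    exact W.restrict_isSome ⟨x, (hmemC x).mpr (Or.inl hx), by simpa using hx⟩
  obtain ⟨CB, hCB⟩ : ∃ CB, C.restrict (fun a => decide (a ∈ S₂)) = some CB := by
    obtain ⟨x, hx⟩ := h₂
    exact W.restrict_isSome ⟨x, (hmemC x).mpr (Or.inr hx), by simpa using hx⟩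
  have hCAleaves := W.restrict_some_leaves hCA
  have hCBleaves := W.restrict_some_leaves hCB
  have hCAnd : CA.leaves.Nodup := hCAleaves ▸ hCnd.filter _
  have hCBnd : CB.leaves.Nodup := hCBleaves ▸ hCnd.filter _
  have hmemCA : ∀ x, x ∈ CA.leaves ↔ x ∈ S₁ := by
    intro x
    rw [hCAleaves, List.mem_filter]
    simp only [decide_eq_true_eq]
    exact ⟨fun h => h.2, fun h => ⟨(hmemC x).mpr (Or.inl h), h⟩⟩
  have hmemCB : ∀ x, x ∈ CB.leaves ↔ x ∈ S₂ := by
    intro x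
    rw [hCBleaves, List.mem_filter]
    simp only [decide_eq_true_eq]
    exact ⟨fun h => h.2, fun h => ⟨(hmemC x).mpr (Or.inr h), h⟩⟩
  have hCAset : CA.leaves.toFinset = S₁ := by
    ext x
    rw [List.mem_toFinset]
    exact hmemCA x
  have hCBset : CB.leaves.toFinset = S₂ := by
    ext x
    rw [List.mem_toFinset]
    exact hmemCB x
  have hACA : A.le CA := by
    intro a b hab m hm
    have haS : a ∈ S₁ := (hmemA a).mp (W.inRel_mem hm).1
    have hbS : b ∈ S₁ := (hmemA b).mp (W.inRel_mem hm).2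
    obtain ⟨l, ⟨hml, hl⟩ | ⟨hml, hl⟩⟩ := hle a b hab m (Or.inl hm)
    · exact ⟨l, Or.inl ⟨hml,
        (W.inRel_restrict CA hCA (by simpa using haS) (by simpa using hbS)).mpr hl⟩⟩
    · exact ⟨l, Or.inr ⟨hml,
        (W.inRel_restrict CA hCA (by simpa using hbS) (by simpa using haS)).mpr hl⟩⟩
  have hBCB : B.le CB := by
    intro a b hab m hm
    have haS : a ∈ S₂ := (hmemB a).mp (W.inRel_mem hm).1
    have hbS : b ∈ S₂ := (hmemB b).mp (W.inRel_mem hm).2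
    obtain ⟨l, ⟨hml, hl⟩ | ⟨hml, hl⟩⟩ := hle a b hab m (Or.inr (Or.inl hm))
    · exact ⟨l, Or.inl ⟨hml,
        (W.inRel_restrict CB hCB (by simpa using haS) (by simpa using hbS)).mpr hl⟩⟩
    · exact ⟨l, Or.inr ⟨hml,
        (W.inRel_restrict CB hCB (by simpa using hbS) (by simpa using haS)).mpr hl⟩⟩
  have hCACB : (W.node i CA CB).le C := by
    intro a b hab m hm
    rcases hm with hm | hm | ⟨e, ha, hb⟩
    · have haS : a ∈ S₁ := (hmemCA a).mp (W.inRel_mem hm).1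
      have hbS : b ∈ S₁ := (hmemCA b).mp (W.inRel_mem hm).2
      exact ⟨m, Or.inl ⟨le_rfl,
        (W.inRel_restrict CA hCA (by simpa using haS) (by simpa using hbS)).mp hm⟩⟩
    · have haS : a ∈ S₂ := (hmemCB a).mp (W.inRel_mem hm).1
      have hbS : b ∈ S₂ := (hmemCB b).mp (W.inRel_mem hm).2
      exact ⟨m, Or.inl ⟨le_rfl,
        (W.inRel_restrict CB hCB (by simpa using haS) (by simpa using hbS)).mp hm⟩⟩
    · have haA : a ∈ A.leaves := (hmemA a).mpr ((hmemCA a).mp ha)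
      have hbB : b ∈ B.leaves := (hmemB b).mpr ((hmemCB b).mp hb)
      subst e
      exact hle a b hab i (Or.inr (Or.inr ⟨rfl, haA, hbB⟩))
  constructor
  · rintro ⟨⟨CA', hCA', hCAeq⟩, ⟨CB', hCB', hCBeq⟩⟩
    rintro ⟨X, Y, ⟨hXnd, hXset⟩, ⟨hYnd, hYset⟩, hnXY, hAX, hBY, hXYC⟩
    rw [hCA] at hCA'
    rw [hCB] at hCB'
    have eA := Option.some.inj hCA'
    have eB := Option.some.inj hCB'
    rw [← eA] at hCAeq
    rw [← eB] at hCBeq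
    apply hnXY
    have hmemX : ∀ x, x ∈ X.leaves ↔ x ∈ S₁ := fun x => by rw [← hXset, List.mem_toFinset]
    have hmemY : ∀ x, x ∈ Y.leaves ↔ x ∈ S₂ := fun x => by rw [← hYset, List.mem_toFinset]
    have hXA : X.le A := by
      intro a b hab m hm
      have haS : a ∈ S₁ := (hmemX a).mp (W.inRel_mem hm).1
      have hbS : b ∈ S₁ := (hmemX b).mp (W.inRel_mem hm).2
      obtain ⟨l, ⟨hml, hl⟩ | ⟨hml, hl⟩⟩ := hXYC a b hab m (Or.inl hm)
      · refine ⟨l, Or.inl ⟨hml, ?_⟩⟩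
        have h1 : CA.inRel a b l :=
          (W.inRel_restrict CA hCA (by simpa using haS) (by simpa using hbS)).mpr hl
        exact (hCAeq.inRel_iff a b l).mp h1
      · refine ⟨l, Or.inr ⟨hml, ?_⟩⟩
        have h1 : CA.inRel b a l :=
          (W.inRel_restrict CA hCA (by simpa using hbS) (by simpa using haS)).mpr hl
        exact (hCAeq.inRel_iff b a l).mp h1
    have hYB : Y.le B := by
      intro a b hab m hm
      have haS : a ∈ S₂ := (hmemY a).mp (W.inRel_mem hm).1
      have hbS : b ∈ S₂ := (hmemY b).mp (W.inRel_mem hm).2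
      obtain ⟨l, ⟨hml, hl⟩ | ⟨hml, hl⟩⟩ := hXYC a b hab m (Or.inr (Or.inl hm))
      · refine ⟨l, Or.inl ⟨hml, ?_⟩⟩
        have h1 : CB.inRel a b l :=
          (W.inRel_restrict CB hCB (by simpa using haS) (by simpa using hbS)).mpr hl
        exact (hCBeq.inRel_iff a b l).mp h1
      · refine ⟨l, Or.inr ⟨hml, ?_⟩⟩
        have h1 : CB.inRel b a l :=
          (W.inRel_restrict CB hCB (by simpa using hbS) (by simpa using haS)).mpr hl
        exact (hCBeq.inRel_iff b a l).mp h1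
    constructor
    · exact W.equiv_of_le_le hXnd hAnd (fun x => (hmemX x).trans (hmemA x).symm) hXA hAX
    · exact W.equiv_of_le_le hYnd hBnd (fun x => (hmemY x).trans (hmemB x).symm) hYB hBY
  · intro hno
    have hgood : CA.equiv A ∧ CB.equiv B := by
      by_contra hcon
      exact hno ⟨CA, CB, ⟨hCAnd, hCAset⟩, ⟨hCBnd, hCBset⟩, hcon, hACA, hBCB, hCACB⟩
    exact ⟨⟨CA, hCA, hgood.1⟩, ⟨CB, hCB, hgood.2⟩⟩
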